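/- Let ρ_sc(x) = (1/(2π))√(4−x^2)·1_{|x|≤2} and m_sc(z) = ∫ ρ_sc(x)/(x−z) dx. For any reals a < b, any ε > 0 with a + ε ≤ b − ε, and any 0 < δ ≤ ε: (1/π)·Im ∫_{a+ε}^{b−ε} m_sc(λ+iδ) dλ − δ/ε ≤ ∫_a^b ρ_sc(x) dx ≤ (1 + 2δ/ε)·(1/π)·Im ∫_{a−ε}^{b+ε} m_sc(λ+iδ) dλ. -/

import Mathlib

open intervalIntegral Real MeasureTheory

/-- The density of the standard semicircle law. -/
noncomputable def rhoSC (x : ℝ) : ℝ :=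
  if |x| ≤ 2 then (1 / (2 * Real.pi)) * Real.sqrt (4 - x ^ 2) else 0

lemma rhoSC_eq (x : ℝ) : rhoSC x = (1 / (2 * Real.pi)) * Real.sqrt (max (4 - x ^ 2) 0) := by
  unfold rhoSC
  split_ifs with h
  · have : (0:ℝ) ≤ 4 - x ^ 2 := by
      have := abs_le.mp h
      nlinarith [this.1, this.2]
    rw [max_eq_left this]
  · have h2 : (2:ℝ) < |x| := not_le.mp h
    have : 4 - x ^ 2 ≤ 0 := by nlinarith [sq_abs x]
    rw [max_eq_right this, Real.sqrt_zero, mul_zero]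

lemma rhoSC_cont : Continuous rhoSC := by
  have : Continuous fun x : ℝ => (1 / (2 * Real.pi)) * Real.sqrt (max (4 - x ^ 2) 0) := by
    fun_prop
  exact this.congr fun x => (rhoSC_eq x).symm

lemma rhoSC_nonneg (x : ℝ) : 0 ≤ rhoSC x := by
  rw [rhoSC_eq]
  positivity

lemma rhoSC_le (x : ℝ) : rhoSC x ≤ 1 / Real.pi := by
  rw [rhoSC_eq]
  have h1 : Real.sqrt (max (4 - x ^ 2) 0) ≤ 2 := by
    rw [show (2:ℝ) = Real.sqrt 4 by rw [show (4:ℝ) = 2^2 by norm_num, Real.sqrt_sq]; norm_num]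
    apply Real.sqrt_le_sqrt
    have := sq_nonneg x
    rcases le_or_gt (4 - x^2) 0 with h | h
    · rw [max_eq_right h]; norm_num
    · rw [max_eq_left h.le]; linarith
  have hπ := Real.pi_pos
  calc (1 / (2 * Real.pi)) * Real.sqrt (max (4 - x ^ 2) 0)
      ≤ (1 / (2 * Real.pi)) * 2 := by
        apply mul_le_mul_of_nonneg_left h1; positivity
    _ = 1 / Real.pi := by field_simp

lemma rhoSC_zero {x : ℝ} (hx : x ∉ Set.Ioc (-2:ℝ) 2) : rhoSC x = 0 := by
  rw [rhoSC_eq]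
  rcases le_or_gt x (-2) with h | h
  · rcases eq_or_lt_of_le h with h | h
    · rw [h]; norm_num
    · rw [max_eq_right (by nlinarith)]; simp
  · have h2 : 2 < x := by
      by_contra h2
      exact hx ⟨h, not_lt.mp h2⟩
    rw [max_eq_right (by nlinarith)]; simp

-- kernel integral
lemma kernel_integral {δ : ℝ} (hδ : 0 < δ) (x A B : ℝ) :
    ∫ lam in A..B, δ / ((x - lam) ^ 2 + δ ^ 2)
      = Real.arctan ((B - x) / δ) - Real.arctan ((A - x) / δ) := by
  have h1 : ∀ lam : ℝ, δ / ((x - lam) ^ 2 + δ ^ 2)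
      = (fun u : ℝ => δ⁻¹ * (1 + (u / δ) ^ 2)⁻¹) (lam - x) := by
    intro lam
    have hδ2 : (0:ℝ) < δ ^ 2 := by positivity
    field_simp
    ring_nf
  rw [intervalIntegral.integral_congr (fun lam _ => h1 lam)]
  rw [intervalIntegral.integral_comp_sub_right (fun u => δ⁻¹ * (1 + (u / δ) ^ 2)⁻¹) x]
  rw [intervalIntegral.integral_const_mul]
  have h2 : (∫ u in (A - x)..(B - x), (1 + (u / δ) ^ 2)⁻¹)
      = δ • ∫ t in ((A - x)/δ)..((B - x)/δ), (1 + t ^ 2)⁻¹ := by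
    rw [← intervalIntegral.integral_comp_div (fun t => ((1:ℝ) + t ^ 2)⁻¹) hδ.ne']
  rw [h2, integral_inv_one_add_sq, smul_eq_mul]
  field_simp

/-- The Stieltjes transform `m_sc(z) = ∫ ρ_sc(x)/(x - z) dx` of the semicircle law. -/
noncomputable def mSC (z : ℂ) : ℂ := ∫ x in (-2 : ℝ)..2, (rhoSC x : ℂ) / (x - z)

lemma im_mSC {δ : ℝ} (hδ : 0 < δ) (lam : ℝ) :
    (mSC (lam + δ * Complex.I)).im
      = ∫ x in (-2:ℝ)..2, rhoSC x * (δ / ((x - lam) ^ 2 + δ ^ 2)) := by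
  set z : ℂ := lam + δ * Complex.I with hz
  have hcont : Continuous fun x : ℝ => (rhoSC x : ℂ) / ((x : ℂ) - z) := by
    apply Continuous.div
    · exact Complex.continuous_ofReal.comp rhoSC_cont
    · fun_prop
    · intro x
      intro hx
      have : ((x:ℂ) - z).im = -δ := by simp [hz]
      rw [hx] at this
      simp at this
      exact hδ.ne' this
  have hint : MeasureTheory.IntegrableOn (fun x : ℝ => (rhoSC x : ℂ) / ((x : ℂ) - z))
      (Set.Ioc (-2:ℝ) 2) := by
    exact (hcont.intervalIntegrable (-2) 2).1
  have him : ∀ x : ℝ, ((rhoSC x : ℂ) / ((x : ℂ) - z)).im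
      = rhoSC x * (δ / ((x - lam) ^ 2 + δ ^ 2)) := by
    intro x
    rw [Complex.div_im]
    have hre : ((x:ℂ) - z).re = x - lam := by simp [hz]
    have him' : ((x:ℂ) - z).im = -δ := by simp [hz]
    have hnsq : Complex.normSq ((x:ℂ) - z) = (x - lam) ^ 2 + δ ^ 2 := by
      rw [Complex.normSq_apply, hre, him']; ring
    rw [hre, him', hnsq]
    simp
    ring
  unfold mSC
  rw [intervalIntegral.integral_of_le (by norm_num : (-2:ℝ) ≤ 2),
      intervalIntegral.integral_of_le (by norm_num : (-2:ℝ) ≤ 2),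
      show (∫ x in Set.Ioc (-2:ℝ) 2, (rhoSC x : ℂ) / ((x:ℂ) - z)).im
        = Complex.imCLM (∫ x in Set.Ioc (-2:ℝ) 2, (rhoSC x : ℂ) / ((x:ℂ) - z)) from rfl,
      ← Complex.imCLM.integral_comp_comm hint]
  exact MeasureTheory.integral_congr_ae (Filter.Eventually.of_forall fun x => him x)

lemma integral_im_mSC {δ : ℝ} (hδ : 0 < δ) {A B : ℝ} (hAB : A ≤ B) :
    ∫ lam in A..B, (mSC (lam + δ * Complex.I)).im
      = ∫ x in (-2:ℝ)..2,
          rhoSC x * (Real.arctan ((B - x) / δ) - Real.arctan ((A - x) / δ)) := by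
  have hker : ∀ x lam : ℝ, (0:ℝ) < (x - lam) ^ 2 + δ ^ 2 := fun x lam => by positivity
  set g : ℝ → ℝ → ℝ := fun lam x => rhoSC x * (δ / ((x - lam) ^ 2 + δ ^ 2)) with hg
  have hgc : Continuous (Function.uncurry g) := by
    apply Continuous.mul
    · exact rhoSC_cont.comp continuous_snd
    · apply Continuous.div continuous_const
      · fun_prop
      · intro p; exact (hker p.2 p.1).ne'
  have hgint : MeasureTheory.Integrable (Function.uncurry g)
      ((MeasureTheory.volume.restrict (Set.Ioc A B)).prod
        (MeasureTheory.volume.restrict (Set.Ioc (-2:ℝ) 2))) := by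
    refine ⟨hgc.aestronglyMeasurable, ?_⟩
    apply MeasureTheory.HasFiniteIntegral.of_bounded (C := (1 / Real.pi) * (1 / δ))
    refine Filter.Eventually.of_forall fun p => ?_
    have h1 : 0 ≤ g p.1 p.2 :=
      mul_nonneg (rhoSC_nonneg _) (div_nonneg hδ.le (hker _ _).le)
    rw [show Function.uncurry g p = g p.1 p.2 from rfl, Real.norm_eq_abs, abs_of_nonneg h1]
    have h2 : δ / ((p.2 - p.1) ^ 2 + δ ^ 2) ≤ 1 / δ := by
      rw [div_le_div_iff₀ (hker _ _) hδ]
      nlinarith [sq_nonneg (p.2 - p.1)]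
    exact mul_le_mul (rhoSC_le _) h2 (div_nonneg hδ.le (hker _ _).le)
      (by positivity)
  calc ∫ lam in A..B, (mSC (lam + δ * Complex.I)).im
      = ∫ lam in A..B, ∫ x in (-2:ℝ)..2, g lam x := by
        exact intervalIntegral.integral_congr fun lam _ => im_mSC hδ lam
    _ = ∫ lam in Set.Ioc A B, ∫ x in Set.Ioc (-2:ℝ) 2, g lam x := by
        rw [intervalIntegral.integral_of_le hAB]
        refine MeasureTheory.integral_congr_ae (Filter.Eventually.of_forall fun lam => ?_)
        simp only []
        rw [intervalIntegral.integral_of_le (by norm_num : (-2:ℝ) ≤ 2)]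
    _ = ∫ x in Set.Ioc (-2:ℝ) 2, ∫ lam in Set.Ioc A B, g lam x :=
        MeasureTheory.integral_integral_swap hgint
    _ = ∫ x in (-2:ℝ)..2,
          rhoSC x * (Real.arctan ((B - x) / δ) - Real.arctan ((A - x) / δ)) := by
        rw [← intervalIntegral.integral_of_le (by norm_num : (-2:ℝ) ≤ 2)]
        refine intervalIntegral.integral_congr fun x _ => ?_
        rw [← intervalIntegral.integral_of_le hAB]
        rw [show (∫ lam in A..B, g lam x)
            = ∫ lam in A..B, rhoSC x * (δ / ((x - lam) ^ 2 + δ ^ 2)) from rfl]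
        rw [intervalIntegral.integral_const_mul, kernel_integral hδ]

lemma arctan_le_self' {t : ℝ} (ht : 0 ≤ t) : Real.arctan t ≤ t := by
  have h1 : 0 ≤ Real.arctan t := by
    rw [← Real.arctan_zero]
    exact Real.arctan_strictMono.monotone ht
  calc Real.arctan t ≤ Real.tan (Real.arctan t) :=
        Real.le_tan h1 (Real.arctan_lt_pi_div_two t)
    _ = t := Real.tan_arctan t

lemma key_out {c : ℝ} (hc : 0 < c) {A B : ℝ}
    (h : c⁻¹ ≤ A ∨ B ≤ -c⁻¹) :
    Real.arctan B - Real.arctan A ≤ c := by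
  have hinv : Real.arctan c⁻¹ = Real.pi / 2 - Real.arctan c := Real.arctan_inv_of_pos hc
  have hself : Real.arctan c ≤ c := arctan_le_self' hc.le
  rcases h with h | h
  · have h1 : Real.arctan c⁻¹ ≤ Real.arctan A := Real.arctan_strictMono.monotone h
    have h2 : Real.arctan B < Real.pi / 2 := Real.arctan_lt_pi_div_two B
    linarith
  · have h1 : Real.arctan B ≤ Real.arctan (-c⁻¹) := Real.arctan_strictMono.monotone h
    rw [Real.arctan_neg] at h1
    have h2 : -(Real.pi / 2) < Real.arctan A := Real.neg_pi_div_two_lt_arctan A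
    linarith

lemma key_in {c : ℝ} (hc : 0 < c) {A B : ℝ} (hA : A ≤ -c⁻¹) (hB : c⁻¹ ≤ B) :
    Real.pi - 2 * c ≤ Real.arctan B - Real.arctan A := by
  have hinv : Real.arctan c⁻¹ = Real.pi / 2 - Real.arctan c := Real.arctan_inv_of_pos hc
  have hself : Real.arctan c ≤ c := arctan_le_self' hc.le
  have h1 : Real.arctan c⁻¹ ≤ Real.arctan B := Real.arctan_strictMono.monotone hB
  have h2 : Real.arctan A ≤ Real.arctan (-c⁻¹) := Real.arctan_strictMono.monotone hA
  rw [Real.arctan_neg] at h2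
  linarith

lemma intervalIntegral_rho_mul (h : ℝ → ℝ) :
    (∫ x in (-2:ℝ)..2, rhoSC x * h x) = ∫ x : ℝ, rhoSC x * h x := by
  rw [intervalIntegral.integral_of_le (by norm_num : (-2:ℝ) ≤ 2)]
  exact MeasureTheory.setIntegral_eq_integral_of_forall_compl_eq_zero
    (fun x hx => by rw [rhoSC_zero hx, zero_mul])

lemma hasCompactSupport_rhoSC : HasCompactSupport rhoSC :=
  HasCompactSupport.intro (isCompact_Icc (a := (-2:ℝ)) (b := 2))
    (fun x hx => rhoSC_zero (fun h => hx (Set.Ioc_subset_Icc_self h)))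

lemma rhoSC_integrable : MeasureTheory.Integrable rhoSC :=
  rhoSC_cont.integrable_of_hasCompactSupport hasCompactSupport_rhoSC

lemma rhoSC_mul_integrable {h : ℝ → ℝ} (hc : Continuous h) :
    MeasureTheory.Integrable (fun x => rhoSC x * h x) :=
  (rhoSC_cont.mul hc).integrable_of_hasCompactSupport
    (hasCompactSupport_rhoSC.mul_right)

lemma rho_mass_le : (∫ x : ℝ, rhoSC x) ≤ Real.pi := by
  have hπ := Real.pi_pos
  rw [← MeasureTheory.setIntegral_eq_integral_of_forall_compl_eq_zero
    (fun x (hx : x ∉ Set.Ioc (-2:ℝ) 2) => rhoSC_zero hx)]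
  have h1 : (∫ x in Set.Ioc (-2:ℝ) 2, rhoSC x) ≤ ∫ _x in Set.Ioc (-2:ℝ) 2, (1 / Real.pi) := by
    apply MeasureTheory.setIntegral_mono_on rhoSC_integrable.integrableOn
      ((MeasureTheory.integrableOn_const_iff).mpr (Or.inr (by simp [Real.volume_Ioc])))
      measurableSet_Ioc
    exact fun x _ => rhoSC_le x
  have h2 : (∫ _x in Set.Ioc (-2:ℝ) 2, (1 / Real.pi)) = 4 * (1 / Real.pi) := by
    rw [MeasureTheory.setIntegral_const, Real.volume_real_Ioc, smul_eq_mul]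
    norm_num [ENNReal.toReal_ofReal]
  rw [h2] at h1
  have h3 : 4 * (1 / Real.pi) ≤ Real.pi := by
    rw [mul_one_div, div_le_iff₀ hπ]
    nlinarith [Real.pi_gt_three]
  linarith

/-- For `a < b`, `ε > 0` with `a + ε ≤ b - ε`, and `0 < δ ≤ ε`,
`(1/π) Im ∫_{a+ε}^{b-ε} m_sc(λ+iδ) dλ - δ/ε ≤ ∫_a^b ρ_sc ≤
(1 + 2δ/ε) (1/π) Im ∫_{a-ε}^{b+ε} m_sc(λ+iδ) dλ`. -/
theorem stmt17 (a b ε δ : ℝ) (hab : a < b) (hε : 0 < ε) (hδ0 : 0 < δ) (hδε : δ ≤ ε)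
    (h : a + ε ≤ b - ε) :
    (1 / Real.pi) * (∫ lam in (a + ε)..(b - ε), (mSC (lam + δ * Complex.I)).im) - δ / ε ≤
        ∫ x in a..b, rhoSC x ∧
      (∫ x in a..b, rhoSC x) ≤
        (1 + 2 * δ / ε) * ((1 / Real.pi) *
          ∫ lam in (a - ε)..(b + ε), (mSC (lam + δ * Complex.I)).im) := by
  have hπ := Real.pi_pos
  have hπ3 := Real.pi_gt_three
  set c := δ / ε with hc_def
  have hc0 : 0 < c := div_pos hδ0 hε
  have hc1 : c ≤ 1 := (div_le_one hε).mpr hδε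
  have hcinv : c⁻¹ = ε / δ := by rw [hc_def, inv_div]
  -- rewrite the target interval integral of rho as an indicator integral over ℝ
  have hrho_eq : (∫ x in a..b, rhoSC x)
      = ∫ x : ℝ, Set.indicator (Set.Ioc a b) rhoSC x := by
    rw [intervalIntegral.integral_of_le hab.le,
      MeasureTheory.integral_indicator measurableSet_Ioc]
  have hind_int : MeasureTheory.Integrable (Set.indicator (Set.Ioc a b) rhoSC) :=
    rhoSC_integrable.indicator measurableSet_Ioc
  constructor
  · -- lower bound
    set w : ℝ → ℝ := fun x =>
      Real.arctan ((b - ε - x) / δ) - Real.arctan ((a + ε - x) / δ) with hw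
    have hwc : Continuous w := by
      apply Continuous.sub <;> exact Real.continuous_arctan.comp (by fun_prop)
    rw [integral_im_mSC hδ0 h, intervalIntegral_rho_mul, hrho_eq]
    have hpt : ∀ x : ℝ, rhoSC x * w x
        ≤ Real.pi * Set.indicator (Set.Ioc a b) rhoSC x + c * rhoSC x := by
      intro x
      by_cases hx : x ∈ Set.Ioc a b
      · rw [Set.indicator_of_mem hx]
        have h1 : w x ≤ Real.pi := by
          have := Real.arctan_lt_pi_div_two ((b - ε - x) / δ)
          have := Real.neg_pi_div_two_lt_arctan ((a + ε - x) / δ)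
          rw [hw]; dsimp only; linarith
        have h2 : rhoSC x * w x ≤ rhoSC x * Real.pi :=
          mul_le_mul_of_nonneg_left h1 (rhoSC_nonneg x)
        nlinarith [rhoSC_nonneg x, hc0.le, mul_nonneg hc0.le (rhoSC_nonneg x)]
      · rw [Set.indicator_of_notMem hx, mul_zero, zero_add]
        have hwle : w x ≤ c := by
          apply key_out hc0
          rcases not_and_or.mp (fun hcon => hx ⟨hcon.1, hcon.2⟩) with h1 | h1
          · push_neg at h1
            left
            rw [hcinv]
            apply div_le_div_of_nonneg_right ?_ hδ0.le
            linarith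
          · push_neg at h1
            right
            rw [hcinv, ← neg_div]
            apply div_le_div_of_nonneg_right ?_ hδ0.le
            linarith
        calc rhoSC x * w x ≤ rhoSC x * c :=
              mul_le_mul_of_nonneg_left hwle (rhoSC_nonneg x)
          _ = c * rhoSC x := mul_comm _ _
    have hint1 : MeasureTheory.Integrable (fun x => rhoSC x * w x) :=
      rhoSC_mul_integrable hwc
    have hint2 : MeasureTheory.Integrable
        (fun x => Real.pi * Set.indicator (Set.Ioc a b) rhoSC x + c * rhoSC x) :=
      (hind_int.const_mul _).add (rhoSC_integrable.const_mul _)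
    have hmono := MeasureTheory.integral_mono hint1 hint2 hpt
    rw [MeasureTheory.integral_add (hind_int.const_mul _) (rhoSC_integrable.const_mul _),
      MeasureTheory.integral_const_mul, MeasureTheory.integral_const_mul] at hmono
    have hmass : (∫ x : ℝ, rhoSC x) ≤ Real.pi := rho_mass_le
    have hmass0 : 0 ≤ ∫ x : ℝ, rhoSC x :=
      MeasureTheory.integral_nonneg rhoSC_nonneg
    have hkey : (∫ x : ℝ, rhoSC x * w x)
        ≤ Real.pi * (∫ x : ℝ, Set.indicator (Set.Ioc a b) rhoSC x) + c * Real.pi := by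
      have := mul_le_mul_of_nonneg_left hmass hc0.le
      linarith
    have := mul_le_mul_of_nonneg_left hkey (le_of_lt (one_div_pos.mpr hπ))
    calc (1 / Real.pi) * (∫ x : ℝ, rhoSC x * w x) - c
        ≤ (1 / Real.pi) * (Real.pi * (∫ x : ℝ, Set.indicator (Set.Ioc a b) rhoSC x)
            + c * Real.pi) - c := by linarith
      _ = ∫ x : ℝ, Set.indicator (Set.Ioc a b) rhoSC x := by
          field_simp
          ring
  · -- upper bound
    set w : ℝ → ℝ := fun x =>
      Real.arctan ((b + ε - x) / δ) - Real.arctan ((a - ε - x) / δ) with hw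
    have hwc : Continuous w := by
      apply Continuous.sub <;> exact Real.continuous_arctan.comp (by fun_prop)
    rw [integral_im_mSC hδ0 (by linarith : a - ε ≤ b + ε), intervalIntegral_rho_mul, hrho_eq]
    have hpt : ∀ x : ℝ, Real.pi * Set.indicator (Set.Ioc a b) rhoSC x
        ≤ (1 + 2 * c) * (rhoSC x * w x) := by
      intro x
      by_cases hx : x ∈ Set.Ioc a b
      · rw [Set.indicator_of_mem hx]
        have hwlb : Real.pi - 2 * c ≤ w x := by
          apply key_in hc0
          · rw [hcinv, ← neg_div]
            apply div_le_div_of_nonneg_right ?_ hδ0.le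
            have := hx.1; linarith
          · rw [hcinv]
            apply div_le_div_of_nonneg_right ?_ hδ0.le
            have := hx.2; linarith
        have h5 : Real.pi ≤ (1 + 2 * c) * (Real.pi - 2 * c) := by nlinarith
        calc Real.pi * rhoSC x ≤ ((1 + 2 * c) * (Real.pi - 2 * c)) * rhoSC x :=
              mul_le_mul_of_nonneg_right h5 (rhoSC_nonneg x)
          _ = (1 + 2 * c) * (rhoSC x * (Real.pi - 2 * c)) := by ring
          _ ≤ (1 + 2 * c) * (rhoSC x * w x) :=
              mul_le_mul_of_nonneg_left
                (mul_le_mul_of_nonneg_left hwlb (rhoSC_nonneg x)) (by linarith)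
      · rw [Set.indicator_of_notMem hx, mul_zero]
        have hw0 : 0 ≤ w x := by
          rw [hw]; dsimp only
          rw [sub_nonneg]
          apply Real.arctan_strictMono.monotone
          apply div_le_div_of_nonneg_right ?_ hδ0.le
          linarith
        exact mul_nonneg (by linarith) (mul_nonneg (rhoSC_nonneg x) hw0)
    have hint1 : MeasureTheory.Integrable
        (fun x => Real.pi * Set.indicator (Set.Ioc a b) rhoSC x) :=
      hind_int.const_mul _
    have hint2 : MeasureTheory.Integrable (fun x => (1 + 2 * c) * (rhoSC x * w x)) :=
      (rhoSC_mul_integrable hwc).const_mul _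
    have hmono := MeasureTheory.integral_mono hint1 hint2 hpt
    rw [MeasureTheory.integral_const_mul, MeasureTheory.integral_const_mul] at hmono
    have h2c : 2 * δ / ε = 2 * c := by rw [hc_def]; ring
    rw [h2c]
    calc (∫ x : ℝ, Set.indicator (Set.Ioc a b) rhoSC x)
        = (1 / Real.pi) * (Real.pi * ∫ x : ℝ, Set.indicator (Set.Ioc a b) rhoSC x) := by
          field_simp
      _ ≤ (1 / Real.pi) * ((1 + 2 * c) * ∫ x : ℝ, rhoSC x * w x) :=
          mul_le_mul_of_nonneg_left hmono (by positivity)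
      _ = (1 + 2 * c) * ((1 / Real.pi) * ∫ x : ℝ, rhoSC x * w x) := by ring
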